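/- Let p be an odd prime and A ⊆ 𝔽_p^n the zero set of x ↦ xᵀx. Define f : 𝔽_p^n → ℂ via its Fourier coefficients by f̂(0) = 0 and f̂(h) = (1_A(h) − p^{−1})/(p^{n/2}+1) for h ≠ 0. Then f is real-valued, 𝔼_x f(x) = 0, and |f(x)| ≤ 1 for all x ∈ 𝔽_p^n. -/

import Mathlib

open Finset

/-- `e_p(a) = e^{2πi a/p}`. -/
noncomputable def ep (p : ℕ) (a : ZMod p) : ℂ :=
  Complex.exp (2 * Real.pi * Complex.I * ((a.val : ℕ) : ℂ) / (p : ℂ))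

/-- The function `f : 𝔽_p^n → ℂ` defined by Fourier inversion from the coefficients
`f̂(0) = 0` and `f̂(h) = (1_A(h) − p⁻¹)/(p^{n/2} + 1)` for `h ≠ 0`, where `A` is the
zero set of `x ↦ xᵀx`. -/
noncomputable def fquad (p n : ℕ) [NeZero p] : (Fin n → ZMod p) → ℂ :=
  fun x => ∑ h : Fin n → ZMod p,
    (if h = 0 then 0 else
      ((if ∑ j, h j ^ 2 = 0 then (1 : ℂ) else 0) - (p : ℂ)⁻¹) /
        ((p : ℂ) ^ ((n : ℂ) / 2) + 1)) * ep p (∑ j, h j * x j)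

section Basics

noncomputable def zet (p : ℕ) : ℂ := Complex.exp (2 * Real.pi * Complex.I / p)

variable {p : ℕ} [NeZero p]

lemma zet_prim : IsPrimitiveRoot (zet p) p :=
  Complex.isPrimitiveRoot_exp p (NeZero.ne p)

lemma zet_pow_p : zet p ^ p = 1 := zet_prim.pow_eq_one

lemma zet_pow_mod (k : ℕ) : zet p ^ k = zet p ^ (k % p) := by
  conv_lhs => rw [← Nat.div_add_mod k p]
  rw [pow_add, pow_mul, zet_pow_p, one_pow, one_mul]

omit [NeZero p] in
lemma ep_eq (a : ZMod p) : ep p a = zet p ^ a.val := by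
  rw [ep, zet, ← Complex.exp_nat_mul]
  ring_nf

omit [NeZero p] in
lemma ep_zero : ep p (0 : ZMod p) = 1 := by
  rw [ep]; simp

lemma ep_add (a b : ZMod p) : ep p (a + b) = ep p a * ep p b := by
  rw [ep_eq, ep_eq, ep_eq, ← pow_add, ZMod.val_add, ← zet_pow_mod]

lemma ep_sum {ι : Type*} (s : Finset ι) (g : ι → ZMod p) :
    ep p (∑ i ∈ s, g i) = ∏ i ∈ s, ep p (g i) := by
  classical
  induction s using Finset.induction_on with
  | empty => simp [ep_zero]
  | insert a s' h ih => rw [Finset.sum_insert h, Finset.prod_insert h, ep_add, ih]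

omit [NeZero p] in
lemma abs_ep (a : ZMod p) : ‖ep p a‖ = 1 := by
  rw [ep, Complex.norm_exp]
  have : (2 * ↑Real.pi * Complex.I * ((a.val : ℕ) : ℂ) / (p : ℂ)).re = 0 := by
    simp [Complex.div_re, Complex.mul_re, Complex.mul_im, Complex.natCast_im, Complex.natCast_re]
  rw [this, Real.exp_zero]

lemma conj_ep (a : ZMod p) : (starRingEnd ℂ) (ep p a) = ep p (-a) := by
  have h1 : ep p (-a) * ep p a = 1 := by rw [← ep_add, neg_add_cancel, ep_zero]
  rw [← Complex.inv_eq_conj (abs_ep a), inv_eq_of_mul_eq_one_left h1]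

noncomputable def zmodFinEquiv (p : ℕ) [NeZero p] : Fin p ≃ ZMod p where
  toFun i := (i : ZMod p)
  invFun t := ⟨t.val, ZMod.val_lt t⟩
  left_inv i := by
    ext
    simp [ZMod.val_cast_of_lt i.isLt]
  right_inv t := ZMod.natCast_rightInverse t

lemma sum_zmod_eq_sum_range (f : ℕ → ℂ) :
    ∑ t : ZMod p, f t.val = ∑ i ∈ range p, f i := by
  rw [← Fin.sum_univ_eq_sum_range]
  exact (Fintype.sum_equiv (zmodFinEquiv p) _ _ (fun i => by
    simp [zmodFinEquiv, ZMod.val_cast_of_lt i.isLt])).symm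

lemma sum_ep_eq_zero (hp : 1 < p) : ∑ t : ZMod p, ep p t = 0 := by
  have h : ∑ t : ZMod p, ep p t = ∑ i ∈ range p, zet p ^ i := by
    simp_rw [ep_eq]
    exact sum_zmod_eq_sum_range (fun k => zet p ^ k)
  rw [h]
  exact zet_prim.geom_sum_eq_zero hp

end Basics

section Prime

variable {p : ℕ} [Fact p.Prime]

lemma sum_ep_mul_eq_zero {c : ZMod p} (hc : c ≠ 0) : ∑ t : ZMod p, ep p (c * t) = 0 := by
  rw [Fintype.sum_equiv (Equiv.mulLeft₀ c hc) (fun t => ep p (c * t)) (ep p) (fun t => rfl)]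
  exact sum_ep_eq_zero (Fact.out : p.Prime).one_lt

lemma sum_ep_mul (c : ZMod p) :
    ∑ t : ZMod p, ep p (c * t) = if c = 0 then (p : ℂ) else 0 := by
  split_ifs with h
  · simp [h, ep_zero]
  · exact sum_ep_mul_eq_zero h

/-- the Gauss-type sum -/
noncomputable def S (p : ℕ) [NeZero p] (a u : ZMod p) : ℂ :=
  ∑ t : ZMod p, ep p (a * t ^ 2 + u * t)

lemma zmod_two_ne_zero (hodd : Odd p) : (2 : ZMod p) ≠ 0 := by
  have hpp := (Fact.out : p.Prime)
  intro h
  have hd : (p : ℕ) ∣ 2 := by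
    rw [show (2 : ZMod p) = ((2:ℕ) : ZMod p) by norm_cast] at h
    exact (ZMod.natCast_eq_zero_iff 2 p).mp h
  have : p = 2 := (Nat.prime_dvd_prime_iff_eq hpp Nat.prime_two).mp hd
  subst this
  exact absurd hodd (by decide)

lemma S_mul_conj (hodd : Odd p) {a : ZMod p} (ha : a ≠ 0) (u : ZMod p) :
    S p a u * (starRingEnd ℂ) (S p a u) = (p : ℂ) := by
  have h2 : (2 : ZMod p) ≠ 0 := zmod_two_ne_zero hodd
  rw [S, map_sum, Finset.sum_mul_sum]
  simp_rw [conj_ep, ← ep_add]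
  have key : ∀ s : ZMod p, ∑ t : ZMod p, ep p (a * s ^ 2 + u * s + -(a * t ^ 2 + u * t))
      = ∑ d : ZMod p, ep p (-(2 * a * s * d) - (a * d ^ 2 + u * d)) := by
    intro s
    exact (Fintype.sum_equiv (Equiv.addLeft s) _ _ (fun d => by
      congr 1
      simp only [Equiv.coe_addLeft]
      ring)).symm
  simp_rw [key]
  rw [Finset.sum_comm]
  have step : ∀ d : ZMod p, ∑ s : ZMod p, ep p (-(2 * a * s * d) - (a * d ^ 2 + u * d))
      = (if (-(2 * a * d)) = 0 then (p : ℂ) else 0) * ep p (-(a * d ^ 2 + u * d)) := by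
    intro d
    have : ∀ s : ZMod p, -(2 * a * s * d) - (a * d ^ 2 + u * d)
        = (-(2 * a * d)) * s + (-(a * d ^ 2 + u * d)) := fun s => by ring
    simp_rw [this, ep_add, ← Finset.sum_mul, sum_ep_mul]
  simp_rw [step]
  rw [Fintype.sum_eq_single (0 : ZMod p)]
  · simp [ep_zero]
  · intro d hd
    have : -(2 * a * d) ≠ 0 := by
      simp only [neg_ne_zero]
      exact mul_ne_zero (mul_ne_zero h2 ha) hd
    rw [if_neg this, zero_mul]

lemma abs_S (hodd : Odd p) {a : ZMod p} (ha : a ≠ 0) (u : ZMod p) :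
    ‖S p a u‖ = Real.sqrt p := by
  have h := S_mul_conj hodd ha u
  rw [Complex.mul_conj] at h
  have h2 : Complex.normSq (S p a u) = p := by exact_mod_cast h
  rw [Complex.norm_def, h2]

/-- indicator identity -/
lemma ind_eq (s : ZMod p) :
    (if s = 0 then (1:ℂ) else 0) - (p : ℂ)⁻¹
      = (p : ℂ)⁻¹ * ∑ a ∈ univ.filter (fun a : ZMod p => a ≠ 0), ep p (a * s) := by
  have hp0 : (p : ℂ) ≠ 0 := Nat.cast_ne_zero.mpr (NeZero.ne p)
  have htot : ∑ a : ZMod p, ep p (a * s) = if s = 0 then (p : ℂ) else 0 := by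
    split_ifs with h
    · simp [h, ep_zero, Finset.card_univ, ZMod.card]
    · have : ∀ a : ZMod p, ep p (a * s) = ep p (s * a) := fun a => by rw [mul_comm]
      simp_rw [this]
      exact sum_ep_mul_eq_zero h
  have hfil : univ.filter (fun a : ZMod p => a ≠ 0) = univ.erase 0 := by
    rw [Finset.filter_ne']
  rw [hfil, Finset.sum_erase_eq_sub (Finset.mem_univ 0), htot, zero_mul, ep_zero]
  split_ifs with h
  · field_simp
  · field_simp
    ring

/-- product formula -/
lemma sum_prod_S {n : ℕ} (a : ZMod p) (x : Fin n → ZMod p) :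
    ∑ h : Fin n → ZMod p, ep p (a * ∑ j, (h j) ^ 2 + ∑ j, h j * x j)
      = ∏ j, S p a (x j) := by
  have harg : ∀ h : Fin n → ZMod p,
      a * ∑ j, (h j) ^ 2 + ∑ j, h j * x j = ∑ j, (a * (h j) ^ 2 + x j * (h j)) := by
    intro h
    rw [Finset.mul_sum, ← Finset.sum_add_distrib]
    congr 1
    ext j
    ring
  simp_rw [harg, ep_sum]
  simp_rw [S]
  rw [Finset.prod_univ_sum]
  rw [Fintype.piFinset_univ]

end Prime

section Main

variable {p : ℕ} [Fact p.Prime]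

lemma cpow_half_real (p n : ℕ) :
    (p : ℂ) ^ ((n : ℂ) / 2) = (((p : ℝ) ^ ((n : ℝ) / 2) : ℝ) : ℂ) := by
  have h : (((n : ℝ) / 2 : ℝ) : ℂ) = (n : ℂ) / 2 := by push_cast; ring
  rw [← h, ← Complex.ofReal_natCast p,
    ← Complex.ofReal_cpow (by positivity : (0:ℝ) ≤ (p : ℝ))]

lemma D_ne_zero (p n : ℕ) : ((p : ℂ) ^ ((n : ℂ) / 2) + 1) ≠ 0 := by
  rw [cpow_half_real]
  intro h
  have : ((((p : ℝ) ^ ((n : ℝ) / 2) + 1 : ℝ)) : ℂ) = 0 := by push_cast; linear_combination h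
  have h2 : ((p : ℝ) ^ ((n : ℝ) / 2) + 1 : ℝ) = 0 := by exact_mod_cast this
  have : (0:ℝ) < (p : ℝ) ^ ((n : ℝ) / 2) + 1 := by positivity
  linarith

/-- main closed form -/
lemma fquad_eq (n : ℕ) (x : Fin n → ZMod p) :
    fquad p n x = (p : ℂ)⁻¹ * ((p : ℂ) ^ ((n : ℂ) / 2) + 1)⁻¹ *
      ∑ a ∈ univ.filter (fun a : ZMod p => a ≠ 0), ((∏ j, S p a (x j)) - 1) := by
  have hp0 : (p : ℂ) ≠ 0 := Nat.cast_ne_zero.mpr (NeZero.ne p)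
  have hD : ((p : ℂ) ^ ((n : ℂ) / 2) + 1) ≠ 0 := D_ne_zero p n
  set D : ℂ := (p : ℂ) ^ ((n : ℂ) / 2) + 1 with hDdef
  set g : (Fin n → ZMod p) → ℂ := fun h =>
    ((if ∑ j, h j ^ 2 = 0 then (1 : ℂ) else 0) - (p : ℂ)⁻¹) / D * ep p (∑ j, h j * x j)
    with hg
  have step1 : fquad p n x = (∑ h : Fin n → ZMod p, g h) - g 0 := by
    rw [fquad, ← hDdef]
    have : ∀ h : Fin n → ZMod p,
        (if h = 0 then 0 else
          ((if ∑ j, h j ^ 2 = 0 then (1 : ℂ) else 0) - (p : ℂ)⁻¹) / D) * ep p (∑ j, h j * x j)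
        = g h - (if h = 0 then g 0 else 0) := by
      intro h
      by_cases hh : h = 0
      · subst hh; simp [g]
      · simp [hh, g]
    simp_rw [this]
    rw [Finset.sum_sub_distrib, Finset.sum_ite_eq' univ (0 : Fin n → ZMod p) (fun _ => g 0)]
    simp
  have step2 : ∀ h : Fin n → ZMod p,
      g h = (p : ℂ)⁻¹ * D⁻¹ * ∑ a ∈ univ.filter (fun a : ZMod p => a ≠ 0),
        ep p (a * ∑ j, h j ^ 2 + ∑ j, h j * x j) := by
    intro h
    rw [hg]
    simp only
    rw [ind_eq (∑ j, h j ^ 2)]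
    rw [Finset.mul_sum, Finset.mul_sum, Finset.sum_div, Finset.sum_mul]
    congr 1
    ext a
    rw [ep_add]
    field_simp
  have step3 : g 0 = (p : ℂ)⁻¹ * D⁻¹ *
      ∑ _a ∈ univ.filter (fun a : ZMod p => a ≠ 0), (1 : ℂ) := by
    rw [step2 0]
    congr 1
    refine Finset.sum_congr rfl fun a _ => ?_
    simp [ep_zero]
  have hsum : (∑ h : Fin n → ZMod p, g h)
      = (p : ℂ)⁻¹ * D⁻¹ * ∑ a ∈ univ.filter (fun a : ZMod p => a ≠ 0), ∏ j, S p a (x j) := by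
    simp_rw [step2]
    rw [← Finset.mul_sum, Finset.sum_comm]
    congr 1
    exact Finset.sum_congr rfl fun a _ => sum_prod_S a x
  rw [step1, hsum, step3, ← mul_sub, ← Finset.sum_sub_distrib]


lemma card_ne_zero_filter : (univ.filter (fun a : ZMod p => a ≠ 0)).card = p - 1 := by
  rw [Finset.filter_ne', Finset.card_erase_of_mem (Finset.mem_univ 0), Finset.card_univ,
    ZMod.card]

lemma abs_fquad_le (hodd : Odd p) (n : ℕ) (x : Fin n → ZMod p) :
    ‖fquad p n x‖ ≤ 1 := by
  have hp1 : (1:ℝ) ≤ (p:ℝ) := by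
    exact_mod_cast (Fact.out : p.Prime).one_lt.le
  set P : ℝ := (p : ℝ) ^ ((n : ℝ) / 2) with hPdef
  have hPpos : 0 < P := by positivity
  have hP : P = Real.sqrt p ^ n := by
    rw [hPdef, Real.sqrt_eq_rpow, ← Real.rpow_natCast ((p:ℝ) ^ ((1:ℝ)/2)) n,
      ← Real.rpow_mul (by positivity)]
    congr 1
    ring
  have habsD : ‖(p : ℂ) ^ ((n : ℂ) / 2) + 1‖ = P + 1 := by
    rw [cpow_half_real]
    rw [show ((((p:ℝ) ^ ((n:ℝ)/2) : ℝ)) : ℂ) + 1 = (((P + 1 : ℝ)) : ℂ) by push_cast; ring]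
    rw [Complex.norm_real, Real.norm_eq_abs]
    exact abs_of_nonneg (by positivity)
  rw [fquad_eq, norm_mul, norm_mul, norm_inv, norm_inv, Complex.norm_natCast, habsD]
  have hterm : ∀ a ∈ univ.filter (fun a : ZMod p => a ≠ 0),
      ‖(∏ j, S p a (x j)) - 1‖ ≤ P + 1 := by
    intro a ha
    have ha0 : a ≠ 0 := (Finset.mem_filter.mp ha).2
    have habs : ‖∏ j, S p a (x j)‖ = P := by
      rw [norm_prod]
      rw [hP]
      rw [Finset.prod_congr rfl (fun j _ => abs_S hodd ha0 (x j))]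
      simp
    calc ‖(∏ j, S p a (x j)) - 1‖
        ≤ ‖∏ j, S p a (x j)‖ + ‖(1 : ℂ)‖ := by
          exact norm_sub_le _ _
      _ = P + 1 := by rw [habs, norm_one]
  have hsum : ‖∑ a ∈ univ.filter (fun a : ZMod p => a ≠ 0),
      ((∏ j, S p a (x j)) - 1)‖ ≤ ((p : ℝ) - 1) * (P + 1) := by
    calc ‖∑ a ∈ univ.filter (fun a : ZMod p => a ≠ 0), ((∏ j, S p a (x j)) - 1)‖
        ≤ ∑ a ∈ univ.filter (fun a : ZMod p => a ≠ 0),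
            ‖(∏ j, S p a (x j)) - 1‖ := norm_sum_le _ _
      _ ≤ ∑ _a ∈ univ.filter (fun a : ZMod p => a ≠ 0), (P + 1) :=
          Finset.sum_le_sum hterm
      _ = ((univ.filter (fun a : ZMod p => a ≠ 0)).card : ℝ) * (P + 1) := by
          rw [Finset.sum_const, nsmul_eq_mul]
      _ = ((p : ℝ) - 1) * (P + 1) := by
          rw [card_ne_zero_filter]
          have : ((p - 1 : ℕ) : ℝ) = (p : ℝ) - 1 := by
            have := (Fact.out : p.Prime).one_lt
            push_cast [Nat.cast_sub this.le]
            ring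
          rw [this]
  calc (p : ℝ)⁻¹ * (P + 1)⁻¹ * ‖∑ a ∈ univ.filter (fun a : ZMod p => a ≠ 0),
        ((∏ j, S p a (x j)) - 1)‖
      ≤ (p : ℝ)⁻¹ * (P + 1)⁻¹ * (((p : ℝ) - 1) * (P + 1)) := by
        gcongr
    _ = ((p : ℝ) - 1) / p := by
        field_simp
    _ ≤ 1 := by
        rw [div_le_one (by linarith)]
        linarith

lemma fquad_mean_zero (n : ℕ) : ∑ x : Fin n → ZMod p, fquad p n x = 0 := by
  simp_rw [fquad]
  rw [Finset.sum_comm]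
  apply Finset.sum_eq_zero
  intro h _
  by_cases hh : h = 0
  · simp [hh]
  · rw [← Finset.mul_sum]
    have hx : ∀ x : Fin n → ZMod p, ep p (∑ j, h j * x j) = ∏ j, ep p (h j * x j) :=
      fun x => ep_sum _ _
    simp_rw [hx]
    rw [← Fintype.piFinset_univ]
    rw [(Finset.prod_univ_sum (fun _ : Fin n => (univ : Finset (ZMod p)))
      (fun j t => ep p (h j * t))).symm]
    obtain ⟨j0, hj0⟩ := Function.ne_iff.mp hh
    rw [Finset.prod_eq_zero (Finset.mem_univ j0) (sum_ep_mul_eq_zero (by simpa using hj0))]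
    rw [mul_zero]

lemma conj_D (p n : ℕ) :
    (starRingEnd ℂ) ((p : ℂ) ^ ((n : ℂ) / 2) + 1) = (p : ℂ) ^ ((n : ℂ) / 2) + 1 := by
  rw [cpow_half_real, map_add, Complex.conj_ofReal, map_one]

lemma fquad_real (n : ℕ) (x : Fin n → ZMod p) : (fquad p n x).im = 0 := by
  rw [← Complex.conj_eq_iff_im]
  rw [fquad, map_sum]
  have hterm : ∀ h : Fin n → ZMod p,
      (starRingEnd ℂ) ((if h = 0 then 0 else
          ((if ∑ j, h j ^ 2 = 0 then (1 : ℂ) else 0) - (p : ℂ)⁻¹) /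
            ((p : ℂ) ^ ((n : ℂ) / 2) + 1)) * ep p (∑ j, h j * x j))
      = (if (-h) = 0 then 0 else
          ((if ∑ j, (-h) j ^ 2 = 0 then (1 : ℂ) else 0) - (p : ℂ)⁻¹) /
            ((p : ℂ) ^ ((n : ℂ) / 2) + 1)) * ep p (∑ j, (-h) j * x j) := by
    intro h
    rw [map_mul, conj_ep]
    congr 1
    · rw [apply_ite (starRingEnd ℂ), map_zero, map_div₀, map_sub,
        apply_ite (starRingEnd ℂ), map_one, map_zero, map_inv₀, Complex.conj_natCast, conj_D]
      have h1 : (-h = 0) ↔ (h = 0) := neg_eq_zero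
      have h2 : (∑ j, (-h) j ^ 2) = ∑ j, h j ^ 2 := by
        apply Finset.sum_congr rfl
        intro j _
        simp [Pi.neg_apply]
      rw [h2]
      by_cases hh : h = 0 <;> simp [hh, h1]
    · congr 1
      rw [← Finset.sum_neg_distrib]
      apply Finset.sum_congr rfl
      intro j _
      simp [Pi.neg_apply]
  simp_rw [hterm]
  exact Fintype.sum_equiv (Equiv.neg (Fin n → ZMod p)) _ _ (fun h => rfl)

end Main

/-- The function `fquad` is real-valued, has mean zero, and takes values in `[−1, 1]`. -/
theorem fquad_properties (p : ℕ) [Fact p.Prime] (hp : Odd p) (n : ℕ) :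
    (∀ x, (fquad p n x).im = 0) ∧
    (∑ x : Fin n → ZMod p, fquad p n x = 0) ∧
    (∀ x, ‖fquad p n x‖ ≤ 1) := by
  exact ⟨fun x => fquad_real n x, fquad_mean_zero n, fun x => abs_fquad_le hp n x⟩
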